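/- For every n ≥ 11 and c ≥ 3, the following c-edge-coloured multigraph on n vertices has exactly c·(n-2 choose 2) + 2c edges, satisfies rd(G) = c, and has no proper Hamiltonian path: take a rainbow complete c-edge-coloured multigraph A on n−2 vertices, fix a vertex v of A, add two new vertices v_1 and v_2, and join each of v_1 and v_2 to v by edges of all c colours. -/

import Mathlib

/-!  A `c`-edge-coloured multigraph on a vertex type `V` is modelled as a family
`G : Fin c → SimpleGraph V`, where `G i` is the simple graph formed by the edges
of colour `i` (no two parallel edges of the same colour). -/

/-- Total number of edges of a `c`-edge-coloured multigraph: the sum of the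
numbers of edges of the colour classes. -/
noncomputable def numEdges {V : Type*} {c : ℕ} (G : Fin c → SimpleGraph V) : ℕ :=
  ∑ i : Fin c, (G i).edgeSet.ncard

/-- The rainbow degree of a vertex: the number of distinct colours appearing on
edges incident to it. -/
noncomputable def rainbowDeg {V : Type*} {c : ℕ} (G : Fin c → SimpleGraph V) (x : V) : ℕ :=
  {i : Fin c | ∃ y, (G i).Adj x y}.ncard

/-- The rainbow degree of the multigraph: the minimum rainbow degree over all vertices. -/
noncomputable def minRainbowDeg {V : Type*} {c : ℕ} (G : Fin c → SimpleGraph V) : ℕ :=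
  sInf (Set.range (rainbowDeg G))

/-- The total degree of a vertex: the number of edges incident to it, over all colours. -/
noncomputable def totalDeg {V : Type*} {c : ℕ} (G : Fin c → SimpleGraph V) (x : V) : ℕ :=
  ∑ i : Fin c, ((G i).neighborSet x).ncard

/-- `v 0, v 1, …, v (m-1)`, with edge `k` (joining `v k` and `v (k+1)`) taken in colour
`κ k`, is a proper path on `m` (distinct) vertices: consecutive edges get distinct
colours. -/
def IsProperPathOn {V : Type*} {c : ℕ} (G : Fin c → SimpleGraph V) (m : ℕ)
    (v : ℕ → V) (κ : ℕ → Fin c) : Prop :=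
  Set.InjOn v (Set.Iio m) ∧
  (∀ i, i + 1 < m → (G (κ i)).Adj (v i) (v (i + 1))) ∧
  (∀ i, i + 2 < m → κ i ≠ κ (i + 1))

/-- `G` has a proper Hamiltonian path: a proper path through all the vertices. -/
def HasProperHamPath {V : Type*} [Fintype V] {c : ℕ} (G : Fin c → SimpleGraph V) : Prop :=
  ∃ (v : ℕ → V) (κ : ℕ → Fin c),
    IsProperPathOn G (Fintype.card V) v κ ∧ ∀ x : V, ∃ i < Fintype.card V, v i = x

/-- `G` has a proper cycle whose vertex set is exactly `S`. -/
def HasProperCycleOn {V : Type*} {c : ℕ} (G : Fin c → SimpleGraph V) (S : Set V) : Prop :=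
  ∃ (m : ℕ) (w : ZMod m → V) (μ : ZMod m → Fin c),
    3 ≤ m ∧ Function.Injective w ∧ Set.range w = S ∧
    (∀ i, (G (μ i)).Adj (w i) (w (i + 1))) ∧
    (∀ i, μ i ≠ μ (i + 1))

/-- A proper path `x_1 y_1 x_2 y_2 … x_q y_q` (on `2q` vertices) compatible with a
set `M` of red edges: its edges are alternately in `M` (these being red) and not
in `M`, beginning and ending with an edge of `M`. -/
def IsCompatiblePath {V : Type*} {c : ℕ} (G : Fin c → SimpleGraph V) (red : Fin c)
    (M : Set (Sym2 V)) (q : ℕ) (w : ℕ → V) (μ : ℕ → Fin c) : Prop :=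
  IsProperPathOn G (2 * q) w μ ∧
  (∀ j, j < q → μ (2 * j) = red ∧ s(w (2 * j), w (2 * j + 1)) ∈ M) ∧
  (∀ j, j + 1 < q → s(w (2 * j + 1), w (2 * j + 2)) ∉ M)


open SimpleGraph

private lemma edgeSet_map' {V W : Type*} (f : V ↪ W) (G : SimpleGraph V) :
    (G.map f).edgeSet = Sym2.map f '' G.edgeSet := by
  ext e
  induction e using Sym2.ind with
  | _ u v =>
    simp only [mem_edgeSet, map_adj, Set.mem_image]
    constructor
    · rintro ⟨a, b, hab, rfl, rfl⟩
      exact ⟨s(a,b), hab, rfl⟩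
    · rintro ⟨q, hq, hmap⟩
      induction q using Sym2.ind with
      | _ a b =>
        rw [Sym2.map_pair_eq, Sym2.eq_iff] at hmap
        rcases hmap with ⟨rfl, rfl⟩ | ⟨rfl, rfl⟩
        exacts [⟨a, b, hq, rfl, rfl⟩, ⟨b, a, hq.symm, rfl, rfl⟩]

/-- For every `n ≥ 11` and `c ≥ 3`, the `c`-edge-coloured multigraph on
`Fin n` obtained from a rainbow complete `c`-edge-coloured multigraph on the `n - 2`
vertices `A = {2, …, n-1}` by adding the two vertices `0 = v₁` and `1 = v₂`, each joined to
the vertex `2 = v ∈ A` by edges of all `c` colours, has exactly `c·(n-2 choose 2) + 2c`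
edges, satisfies `rd(G) = c`, and has no proper Hamiltonian path. -/
theorem stmt19 {n c : ℕ} (h11 : 11 ≤ n) (hc : 3 ≤ c) :
    ∀ G : Fin c → SimpleGraph (Fin n),
      G = (fun _ => SimpleGraph.fromRel
              (fun (u v : Fin n) => (2 ≤ (u : ℕ) ∧ 2 ≤ (v : ℕ)) ∨ ((u : ℕ) < 2 ∧ (v : ℕ) = 2))) →
      numEdges G = c * (n - 2).choose 2 + 2 * c ∧
      minRainbowDeg G = c ∧ ¬ HasProperHamPath G := by
  intro G hG
  subst hG
  set H : SimpleGraph (Fin n) := SimpleGraph.fromRel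
      (fun (u v : Fin n) => (2 ≤ (u : ℕ) ∧ 2 ≤ (v : ℕ)) ∨ ((u : ℕ) < 2 ∧ (v : ℕ) = 2)) with hH
  have hadjH : ∀ u v : Fin n, H.Adj u v ↔ u ≠ v ∧
      ((2 ≤ (u : ℕ) ∧ 2 ≤ (v : ℕ)) ∨ ((u : ℕ) < 2 ∧ (v : ℕ) = 2) ∨
       ((v : ℕ) < 2 ∧ (u : ℕ) = 2)) := by
    intro u v
    rw [hH, fromRel_adj]
    tauto
  have h0n : (0 : ℕ) < n := by omega
  have h1n : (1 : ℕ) < n := by omega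
  have h2n : (2 : ℕ) < n := by omega
  have h3n : (3 : ℕ) < n := by omega
  set x0 : Fin n := ⟨0, h0n⟩ with hx0
  set x1 : Fin n := ⟨1, h1n⟩ with hx1
  set x2 : Fin n := ⟨2, h2n⟩ with hx2
  set x3 : Fin n := ⟨3, h3n⟩ with hx3
  have hx0v : (x0 : ℕ) = 0 := rfl
  have hx1v : (x1 : ℕ) = 1 := rfl
  have hx2v : (x2 : ℕ) = 2 := rfl
  have hx3v : (x3 : ℕ) = 3 := rfl
  -- the embedding of Fin (n-2) into Fin n
  set f : Fin (n-2) ↪ Fin n :=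
    ⟨fun a => ⟨(a : ℕ) + 2, by omega⟩, by
      intro a b hab
      have : (a : ℕ) + 2 = (b : ℕ) + 2 := congrArg Fin.val hab
      exact Fin.ext (by omega)⟩ with hf
  have hfval : ∀ a : Fin (n-2), ((f a : Fin n) : ℕ) = (a : ℕ) + 2 := fun a => rfl
  -- decomposition of H
  have hdecomp : H = ((⊤ : SimpleGraph (Fin (n-2))).map f) ⊔
      fromEdgeSet {s(x0, x2), s(x1, x2)} := by
    ext u v
    rw [hadjH]
    simp only [sup_adj, map_adj, top_adj, fromEdgeSet_adj, Set.mem_insert_iff,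
      Set.mem_singleton_iff, Sym2.eq_iff]
    constructor
    · rintro ⟨hne, h | h | h⟩
      · left
        refine ⟨⟨(u : ℕ) - 2, by omega⟩, ⟨(v : ℕ) - 2, by omega⟩, ?_, ?_, ?_⟩
        · intro heq
          apply hne
          have := congrArg Fin.val heq
          simp only at this
          exact Fin.ext (by omega)
        · exact Fin.ext (by rw [hfval]; simp only; omega)
        · exact Fin.ext (by rw [hfval]; simp only; omega)
      · right
        refine ⟨?_, hne⟩
        have hu : (u : ℕ) = 0 ∨ (u : ℕ) = 1 := by omega
        rcases hu with hu | hu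
        · left; left; exact ⟨Fin.ext (by rw [hu, hx0v]), Fin.ext (by rw [h.2, hx2v])⟩
        · right; left; exact ⟨Fin.ext (by rw [hu, hx1v]), Fin.ext (by rw [h.2, hx2v])⟩
      · right
        refine ⟨?_, hne⟩
        have hv : (v : ℕ) = 0 ∨ (v : ℕ) = 1 := by omega
        rcases hv with hv | hv
        · left; right; exact ⟨Fin.ext (by rw [h.2, hx2v]), Fin.ext (by rw [hv, hx0v])⟩
        · right; right; exact ⟨Fin.ext (by rw [h.2, hx2v]), Fin.ext (by rw [hv, hx1v])⟩
    · rintro (⟨a, b, hab, rfl, rfl⟩ | ⟨h, hne⟩)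
      · refine ⟨?_, Or.inl ⟨by rw [hfval]; omega, by rw [hfval]; omega⟩⟩
        exact fun heq => hab (f.injective heq)
      · refine ⟨hne, ?_⟩
        rcases h with (⟨rfl, rfl⟩ | ⟨rfl, rfl⟩) | (⟨rfl, rfl⟩ | ⟨rfl, rfl⟩) <;>
          simp only [hx0v, hx1v, hx2v] <;> norm_num
  -- edge count of H
  have hHcard : H.edgeSet.ncard = (n - 2).choose 2 + 2 := by
    rw [hdecomp, edgeSet_sup, edgeSet_fromEdgeSet]
    have hpairs : ({s(x0, x2), s(x1, x2)} : Set (Sym2 (Fin n))) \ {e | e.IsDiag} =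
        {s(x0, x2), s(x1, x2)} := by
      ext e
      simp only [Set.mem_diff, Set.mem_setOf_eq]
      refine ⟨fun h => h.1, fun h => ⟨h, ?_⟩⟩
      rcases h with rfl | rfl <;>
        · rw [Sym2.isDiag_iff_proj_eq]
          intro hd
          have := congrArg Fin.val hd
          rw [hx2v] at this
          first
          | (rw [hx0v] at this; omega)
          | (rw [hx1v] at this; omega)
    rw [Sym2.diagSet_eq_setOfPred_isDiag, hpairs]
    have hnotmem : ∀ e ∈ ({s(x0, x2), s(x1, x2)} : Set (Sym2 (Fin n))),
        e ∉ ((⊤ : SimpleGraph (Fin (n-2))).map f).edgeSet := by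
      rintro e (rfl | rfl) he <;>
      · rw [edgeSet_map'] at he
        obtain ⟨q, -, hq⟩ := he
        induction q using Sym2.ind with
        | _ a b =>
          rw [Sym2.map_pair_eq, Sym2.eq_iff] at hq
          rcases hq with ⟨h1, h2⟩ | ⟨h1, h2⟩ <;>
            · have v1 := congrArg Fin.val h1
              have v2 := congrArg Fin.val h2
              simp only [hfval, hx0v, hx1v, hx2v] at v1 v2 <;> omega
    have hdisj : Disjoint ((⊤ : SimpleGraph (Fin (n-2))).map f).edgeSet
        ({s(x0, x2), s(x1, x2)} : Set (Sym2 (Fin n))) := by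
      rw [Set.disjoint_right]
      exact fun {e} he => hnotmem e he
    rw [Set.ncard_union_eq hdisj (Set.toFinite _) (Set.toFinite _)]
    have hne : s(x0, x2) ≠ s(x1, x2) := by
      intro h
      rw [Sym2.eq_iff] at h
      rcases h with ⟨h1, -⟩ | ⟨h1, -⟩ <;>
        · have := congrArg Fin.val h1
          simp only [hx0v, hx1v, hx2v] at this <;> omega
    rw [Set.ncard_pair hne]
    congr 1
    rw [edgeSet_map', Set.ncard_image_of_injective _ (Sym2.map.injective f.injective)]
    rw [Set.ncard_eq_toFinset_card']
    have heq : (⊤ : SimpleGraph (Fin (n-2))).edgeSet.toFinset =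
        (⊤ : SimpleGraph (Fin (n-2))).edgeFinset := rfl
    rw [heq, card_edgeFinset_top_eq_card_choose_two, Fintype.card_fin]
  -- only neighbour of small vertices is x2
  have honly : ∀ x y : Fin n, (x : ℕ) < 2 → H.Adj x y → (y : ℕ) = 2 := by
    intro x y hx hxy
    rw [hadjH] at hxy
    rcases hxy with ⟨-, h | h | h⟩ <;> omega
  refine ⟨?_, ?_, ?_⟩
  · -- numEdges
    rw [numEdges]
    simp only [hHcard]
    rw [Finset.sum_const, Finset.card_univ, Fintype.card_fin, smul_eq_mul]
    ring
  · -- minRainbowDeg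
    have hrd : ∀ x : Fin n, rainbowDeg (fun _ : Fin c => H) x = c := by
      intro x
      rw [rainbowDeg]
      have huniv : {i : Fin c | ∃ y, H.Adj x y} = Set.univ := by
        ext i
        simp only [Set.mem_setOf_eq, Set.mem_univ, iff_true]
        by_cases hx : (x : ℕ) < 2
        · refine ⟨x2, ?_⟩
          rw [hadjH]
          refine ⟨fun h => ?_, Or.inr (Or.inl ⟨hx, hx2v⟩)⟩
          have := congrArg Fin.val h
          rw [hx2v] at this
          omega
        · by_cases hx2' : (x : ℕ) = 2
          · refine ⟨x3, ?_⟩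
            rw [hadjH]
            refine ⟨fun h => ?_, Or.inl ⟨by omega, by simp only [hx3v]; norm_num⟩⟩
            have := congrArg Fin.val h
            rw [hx3v] at this
            omega
          · refine ⟨x2, ?_⟩
            rw [hadjH]
            refine ⟨fun h => ?_, Or.inl ⟨by omega, by simp only [hx2v]; norm_num⟩⟩
            have := congrArg Fin.val h
            rw [hx2v] at this
            omega
      rw [huniv, Set.ncard_univ, Nat.card_eq_fintype_card, Fintype.card_fin]
    rw [minRainbowDeg]
    have hrange : Set.range (rainbowDeg (fun _ : Fin c => H)) = {c} := by
      ext k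
      simp only [Set.mem_range, Set.mem_singleton_iff]
      constructor
      · rintro ⟨x, rfl⟩; exact hrd x
      · rintro rfl; exact ⟨x0, hrd x0⟩
    rw [hrange, csInf_singleton]
  · -- no proper Hamiltonian path
    rintro ⟨v, κ, ⟨hinj, hadj, -⟩, hsurj⟩
    rw [Fintype.card_fin] at hinj hadj hsurj
    obtain ⟨i0, hi0n, hi0⟩ := hsurj x0
    obtain ⟨i1, hi1n, hi1⟩ := hsurj x1
    -- small-valued vertices must be endpoints
    have hend : ∀ i, i < n → ((v i : Fin n) : ℕ) < 2 → i = 0 ∨ i = n - 1 := by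
      intro i hin hv2
      by_contra hcon
      push_neg at hcon
      have h1 : 0 < i := by omega
      have h2 : i + 1 < n := by omega
      have ha : H.Adj (v i) (v (i + 1)) := hadj i h2
      have hb : H.Adj (v i) (v (i - 1)) := by
        have h' := hadj (i - 1) (by omega)
        rw [show i - 1 + 1 = i by omega] at h'
        exact h'.symm
      have e1 : ((v (i + 1) : Fin n) : ℕ) = 2 := honly _ _ hv2 ha
      have e2 : ((v (i - 1) : Fin n) : ℕ) = 2 := honly _ _ hv2 hb
      have heq : v (i + 1) = v (i - 1) := Fin.ext (by omega)
      have := hinj (Set.mem_Iio.mpr h2) (Set.mem_Iio.mpr (by omega)) heq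
      omega
    have hv0small : ((v i0 : Fin n) : ℕ) < 2 := by rw [hi0, hx0v]; omega
    have hv1small : ((v i1 : Fin n) : ℕ) < 2 := by rw [hi1, hx1v]; omega
    have hd0 : i0 = 0 ∨ i0 = n - 1 := hend i0 hi0n hv0small
    have hd1 : i1 = 0 ∨ i1 = n - 1 := hend i1 hi1n hv1small
    have hne01 : i0 ≠ i1 := by
      rintro rfl
      rw [hi0] at hi1
      have := congrArg Fin.val hi1
      rw [hx0v, hx1v] at this
      omega
    have hstart : ∀ i, ((v i : Fin n) : ℕ) < 2 → i = 0 → ((v 1 : Fin n) : ℕ) = 2 := by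
      rintro i hv2 rfl
      exact honly _ _ hv2 (hadj 0 (by omega))
    have hfin : ∀ i, ((v i : Fin n) : ℕ) < 2 → i = n - 1 → ((v (n-2) : Fin n) : ℕ) = 2 := by
      rintro i hv2 hi
      subst hi
      have h' := hadj (n - 2) (by omega)
      rw [show n - 2 + 1 = n - 1 by omega] at h'
      exact honly _ _ hv2 h'.symm
    have key : ((v 1 : Fin n) : ℕ) = 2 ∧ ((v (n-2) : Fin n) : ℕ) = 2 := by
      rcases hd0 with h0 | h0 <;> rcases hd1 with h1 | h1
      · omega
      · exact ⟨hstart i0 hv0small h0, hfin i1 hv1small h1⟩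
      · exact ⟨hstart i1 hv1small h1, hfin i0 hv0small h0⟩
      · omega
    have heq : v 1 = v (n - 2) := Fin.ext (by omega)
    have := hinj (Set.mem_Iio.mpr (by omega)) (Set.mem_Iio.mpr (by omega)) heq
    omega
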